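/- For integers 1 ≤ t ≤ k < n, let x_1 = k-t, x_2 = ... = x_t = 0, and x_{t+1} = ... = x_n = -1. Then every subset of {1,...,n} of size greater than k has negative sum, exactly t of the numbers are nonnegative, and the number of subsets with nonnegative sum equals 2^{t-1}(C(n-t,k-t) + ... + C(n-t,0) + 1). -/

import Mathlib

open scoped Classical

private lemma card_filter_fin_val (n : ℕ) (p : ℕ → Prop) [DecidablePred p] :
    (Finset.univ.filter (fun i : Fin n => p i.val)).card = ((Finset.range n).filter p).card := by
  apply Finset.card_bij (fun (i : Fin n) _ => (i : ℕ))
  · intro a ha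
    simp only [Finset.mem_filter, Finset.mem_univ, true_and] at ha
    simp [a.isLt, ha]
  · intro a _ b _ h
    exact Fin.val_injective h
  · intro b hb
    simp only [Finset.mem_filter, Finset.mem_range] at hb
    exact ⟨⟨b, hb.1⟩, by simp [hb.2], rfl⟩

theorem stmt_17 (n k t : ℕ) (ht : 1 ≤ t) (htk : t ≤ k) (hkn : k < n)
    (x : Fin n → ℝ)
    (h0 : ∀ i : Fin n, (i : ℕ) = 0 → x i = (k : ℝ) - t)
    (h1 : ∀ i : Fin n, 1 ≤ (i : ℕ) → (i : ℕ) < t → x i = 0)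
    (h2 : ∀ i : Fin n, t ≤ (i : ℕ) → x i = -1) :
    (∀ S : Finset (Fin n), k < S.card → ∑ i ∈ S, x i < 0) ∧
      (Finset.univ.filter (fun i : Fin n => 0 ≤ x i)).card = t ∧
      (Finset.univ.filter (fun S : Finset (Fin n) => 0 ≤ ∑ i ∈ S, x i)).card =
        2 ^ (t - 1) * ((∑ i ∈ Finset.range (k - t + 1), (n - t).choose i) + 1) := by
  have hn0 : 0 < n := by omega
  have htkR : (t : ℝ) ≤ (k : ℝ) := by exact_mod_cast htk
  set z : Fin n := ⟨0, hn0⟩ with hzdef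
  have hzval : (z : ℕ) = 0 := rfl
  -- value formula
  have hx : ∀ i : Fin n, x i = (if i = z then (k : ℝ) - t else 0)
      + (if t ≤ (i : ℕ) then -1 else 0) := by
    intro i
    by_cases hiz : i = z
    · subst hiz
      rw [h0 z rfl]
      simp [hzval]; omega
    · have hi1 : 1 ≤ (i : ℕ) := by
        rcases Nat.eq_zero_or_pos (i : ℕ) with h | h
        · exact absurd (Fin.val_injective (h.trans hzval.symm)) hiz
        · exact h
      by_cases hit : t ≤ (i : ℕ)
      · rw [h2 i hit]; simp [hiz, hit]
      · rw [h1 i hi1 (by omega)]; simp [hiz, hit]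
  -- sum formula
  have hsum : ∀ S : Finset (Fin n), ∑ i ∈ S, x i =
      (if z ∈ S then (k : ℝ) - t else 0)
        - ((S.filter (fun i : Fin n => t ≤ (i : ℕ))).card : ℝ) := by
    intro S
    simp_rw [hx, Finset.sum_add_distrib]
    rw [Finset.sum_ite_eq' S z]
    congr 1
    rw [← Finset.sum_filter, Finset.sum_const, nsmul_eq_mul]
    ring
  -- head count bound
  have hcount : ∀ S : Finset (Fin n),
      (S.filter (fun i : Fin n => ¬ t ≤ (i : ℕ))).card ≤ t := by
    intro S
    calc (S.filter (fun i : Fin n => ¬ t ≤ (i : ℕ))).card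
        ≤ (Finset.univ.filter (fun i : Fin n => ¬ t ≤ (i : ℕ))).card := by
          apply Finset.card_le_card
          exact Finset.filter_subset_filter _ (Finset.subset_univ S)
      _ = ((Finset.range n).filter (fun m => ¬ t ≤ m)).card :=
          card_filter_fin_val n (fun m => ¬ t ≤ m)
      _ ≤ t := by
          have he : (Finset.range n).filter (fun m => ¬ t ≤ m) = Finset.range t := by
            ext m; simp; omega
          rw [he, Finset.card_range]
  refine ⟨?_, ?_, ?_⟩
  · -- part 1
    intro S hS
    have hsplit := Finset.card_filter_add_card_filter_not
      (s := S) (p := fun i : Fin n => t ≤ (i : ℕ))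
    have h1c := hcount S
    rw [hsum S]
    have hcard : k + 1 - t ≤ (S.filter (fun i : Fin n => t ≤ (i : ℕ))).card := by omega
    have hcast : ((k : ℝ) + 1 - t) ≤ ((S.filter (fun i : Fin n => t ≤ (i : ℕ))).card : ℝ) := by
      calc ((k : ℝ) + 1 - t) = ((k + 1 - t : ℕ) : ℝ) := by
            rw [Nat.cast_sub (by omega)]; push_cast; ring
        _ ≤ _ := by exact_mod_cast hcard
    by_cases hz : z ∈ S
    · rw [if_pos hz]; linarith
    · rw [if_neg hz]; linarith
  · -- part 2
    have he : Finset.univ.filter (fun i : Fin n => 0 ≤ x i)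
        = Finset.univ.filter (fun i : Fin n => (i : ℕ) < t) := by
      ext i
      simp only [Finset.mem_filter, Finset.mem_univ, true_and]
      rw [hx i]
      by_cases hiz : i = z
      · subst hiz
        rw [if_pos rfl, if_neg (show ¬ t ≤ (z : ℕ) by rw [hzval]; omega), add_zero]
        exact ⟨fun _ => by omega, fun _ => by linarith⟩
      · by_cases hit : t ≤ (i : ℕ)
        · simp only [hiz, hit]
          exact iff_of_false (by norm_num) (by omega)
        · simp [hiz, hit]; omega
    rw [he, card_filter_fin_val n (fun m => m < t)]
    have he2 : (Finset.range n).filter (fun m => m < t) = Finset.range t := by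
      ext m; simp; omega
    rw [he2, Finset.card_range]
  · -- part 3
    set H : Finset (Fin n) :=
      Finset.univ.filter (fun i : Fin n => 1 ≤ (i : ℕ) ∧ (i : ℕ) < t) with hHdef
    set T : Finset (Fin n) :=
      Finset.univ.filter (fun i : Fin n => t ≤ (i : ℕ)) with hTdef
    have hmemH : ∀ i : Fin n, i ∈ H ↔ 1 ≤ (i : ℕ) ∧ (i : ℕ) < t := by
      intro i; simp [hHdef]
    have hmemT : ∀ i : Fin n, i ∈ T ↔ t ≤ (i : ℕ) := by
      intro i; simp [hTdef]
    have hzT : z ∉ T := by rw [hmemT, hzval]; omega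
    have hdisj : ∀ i : Fin n, i ∈ H → i ∉ insert z T := by
      intro i hi
      rw [hmemH] at hi
      simp only [Finset.mem_insert, hmemT]
      push_neg
      constructor
      · intro hc; rw [hc, hzval] at hi; omega
      · omega
    have hcardH : H.card = t - 1 := by
      have := card_filter_fin_val n (fun m => 1 ≤ m ∧ m < t)
      rw [hHdef, this]
      have he : (Finset.range n).filter (fun m => 1 ≤ m ∧ m < t) = Finset.Ico 1 t := by
        ext m; simp; omega
      rw [he, Nat.card_Ico]
    have hcardT : T.card = n - t := by
      have := card_filter_fin_val n (fun m => t ≤ m)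
      rw [hTdef, this]
      have he : (Finset.range n).filter (fun m => t ≤ m) = Finset.Ico t n := by
        ext m; simp; omega
      rw [he, Nat.card_Ico]
    -- sum over subsets of insert z T
    have hDsum : ∀ D : Finset (Fin n), D ⊆ insert z T →
        ∑ i ∈ D, x i = (if z ∈ D then (k : ℝ) - t else 0) - ((D.erase z).card : ℝ) := by
      intro D hD
      have he : D.filter (fun i : Fin n => t ≤ (i : ℕ)) = D.erase z := by
        ext i
        simp only [Finset.mem_filter, Finset.mem_erase]
        constructor
        · rintro ⟨hi, hti⟩
          refine ⟨?_, hi⟩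
          intro hc; rw [hc, hzval] at hti; omega
        · rintro ⟨hne, hi⟩
          refine ⟨hi, ?_⟩
          have := hD hi
          rw [Finset.mem_insert] at this
          rcases this with h | h
          · exact absurd h hne
          · exact (hmemT i).mp h
      rw [hsum D, he]
    -- every subset splits as (head part, rest)
    have hsub : ∀ S : Finset (Fin n), S \ H ⊆ insert z T := by
      intro S i hi
      rw [Finset.mem_sdiff, hmemH] at hi
      rw [Finset.mem_insert, hmemT]
      by_cases hc : i = z
      · exact Or.inl hc
      · right
        have hi1 : 1 ≤ (i : ℕ) := by
          rcases Nat.eq_zero_or_pos (i : ℕ) with h | h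
          · exact absurd (Fin.val_injective (h.trans hzval.symm)) hc
          · exact h
        by_contra hcon
        exact hi.2 ⟨hi1, by omega⟩
    have hsumH : ∀ B : Finset (Fin n), B ⊆ H → ∑ i ∈ B, x i = 0 := by
      intro B hB
      apply Finset.sum_eq_zero
      intro i hi
      have := (hmemH i).mp (hB hi)
      exact h1 i this.1 this.2
    have hsplitsum : ∀ S : Finset (Fin n), ∑ i ∈ S, x i = ∑ i ∈ S \ H, x i := by
      intro S
      rw [← Finset.sum_inter_add_sum_sdiff S H x, hsumH (S ∩ H) (Finset.inter_subset_right),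
        zero_add]
    set G : Finset (Finset (Fin n)) :=
      (insert z T).powerset.filter (fun D => 0 ≤ ∑ i ∈ D, x i) with hGdef
    -- main bijection
    have hbij : (Finset.univ.filter (fun S : Finset (Fin n) => 0 ≤ ∑ i ∈ S, x i)).card
        = (H.powerset ×ˢ G).card := by
      refine Finset.card_bij' (fun S _ => (S ∩ H, S \ H)) (fun p _ => p.1 ∪ p.2) ?_ ?_ ?_ ?_
      · intro S hS
        simp only [Finset.mem_filter, Finset.mem_univ, true_and] at hS
        simp only [Finset.mem_product, Finset.mem_powerset, hGdef, Finset.mem_filter]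
        exact ⟨Finset.inter_subset_right, hsub S, by rw [← hsplitsum S]; exact hS⟩
      · intro p hp
        simp only [Finset.mem_product, Finset.mem_powerset, hGdef, Finset.mem_filter] at hp
        obtain ⟨hp1, hp2, hp3⟩ := hp
        simp only [Finset.mem_filter, Finset.mem_univ, true_and]
        have hdis : Disjoint p.1 p.2 := by
          rw [Finset.disjoint_left]
          intro a ha hb
          exact hdisj a (hp1 ha) (hp2 hb)
        rw [Finset.sum_union hdis, hsumH p.1 hp1, zero_add]
        exact hp3
      · intro S _
        show S ∩ H ∪ S \ H = S
        rw [Finset.union_comm]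
        exact Finset.sdiff_union_inter S H
      · intro p hp
        simp only [Finset.mem_product, Finset.mem_powerset, hGdef, Finset.mem_filter] at hp
        obtain ⟨hp1, hp2, _⟩ := hp
        have h1' : (p.1 ∪ p.2) ∩ H = p.1 := by
          ext i
          simp only [Finset.mem_inter, Finset.mem_union]
          constructor
          · rintro ⟨h | h, hH⟩
            · exact h
            · exact absurd (hp2 h) (by simpa using hdisj i hH)
          · intro h; exact ⟨Or.inl h, hp1 h⟩
        have h2' : (p.1 ∪ p.2) \ H = p.2 := by
          ext i
          simp only [Finset.mem_sdiff, Finset.mem_union]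
          constructor
          · rintro ⟨h | h, hH⟩
            · exact absurd (hp1 h) hH
            · exact h
          · intro h
            have : i ∉ H := fun hH => hdisj i hH (hp2 h)
            exact ⟨Or.inr h, this⟩
        rw [Prod.ext_iff]
        exact ⟨h1', h2'⟩
    rw [hbij, Finset.card_product, Finset.card_powerset, hcardH]
    -- compute card G
    congr 1
    -- split G by membership of z
    have hGsplit := Finset.card_filter_add_card_filter_not
      (s := G) (p := fun D : Finset (Fin n) => z ∈ D)
    -- z ∉ D part: only the empty set
    have hempty : G.filter (fun D : Finset (Fin n) => ¬ z ∈ D) = {∅} := by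
      ext D
      simp only [Finset.mem_filter, hGdef, Finset.mem_powerset, Finset.mem_singleton]
      constructor
      · rintro ⟨⟨hD, hDs⟩, hz⟩
        rw [hDsum D hD, if_neg hz, Finset.erase_eq_of_notMem hz, zero_sub] at hDs
        have : (D.card : ℝ) ≤ 0 := by linarith
        have : D.card = 0 := by exact_mod_cast le_antisymm this (by positivity)
        exact Finset.card_eq_zero.mp this
      · rintro rfl
        exact ⟨⟨Finset.empty_subset _, by simp⟩, by simp⟩
    -- z ∈ D part: bijection with small subsets of T
    have hfull : (G.filter (fun D : Finset (Fin n) => z ∈ D)).card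
        = (T.powerset.filter (fun C : Finset (Fin n) => C.card ≤ k - t)).card := by
      refine Finset.card_bij' (fun D _ => D.erase z) (fun C _ => insert z C) ?_ ?_ ?_ ?_
      · intro D hD
        simp only [Finset.mem_filter, hGdef, Finset.mem_powerset] at hD ⊢
        obtain ⟨⟨hDsub, hDs⟩, hz⟩ := hD
        constructor
        · intro i hi
          rw [Finset.mem_erase] at hi
          have := hDsub hi.2
          rw [Finset.mem_insert] at this
          rcases this with h | h
          · exact absurd h hi.1
          · exact h
        · rw [hDsum D hDsub, if_pos hz] at hDs
          have hR : ((D.erase z).card : ℝ) ≤ (k : ℝ) - t := by linarith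
          have : ((D.erase z).card : ℝ) ≤ ((k - t : ℕ) : ℝ) := by
            rw [Nat.cast_sub htk]; exact hR
          exact_mod_cast this
      · intro C hC
        simp only [Finset.mem_filter, Finset.mem_powerset, hGdef] at hC ⊢
        obtain ⟨hCsub, hCcard⟩ := hC
        have hzC : z ∉ C := fun h => hzT (hCsub h)
        have hins : insert z C ⊆ insert z T := Finset.insert_subset_insert z hCsub
        refine ⟨⟨hins, ?_⟩, Finset.mem_insert_self z C⟩
        rw [hDsum _ hins, if_pos (Finset.mem_insert_self z C), Finset.erase_insert hzC]
        have : ((C.card : ℕ) : ℝ) ≤ ((k - t : ℕ) : ℝ) := by exact_mod_cast hCcard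
        rw [Nat.cast_sub htk] at this
        linarith
      · intro D hD
        simp only [Finset.mem_filter] at hD
        exact Finset.insert_erase hD.2
      · intro C hC
        simp only [Finset.mem_filter, Finset.mem_powerset] at hC
        exact Finset.erase_insert (fun h => hzT (hC.1 h))
    -- the small-subsets count
    have hW : (T.powerset.filter (fun C : Finset (Fin n) => C.card ≤ k - t)).card
        = ∑ i ∈ Finset.range (k - t + 1), (n - t).choose i := by
      have hun : T.powerset.filter (fun C : Finset (Fin n) => C.card ≤ k - t)
          = (Finset.range (k - t + 1)).biUnion (fun i => Finset.powersetCard i T) := by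
        ext C
        simp only [Finset.mem_filter, Finset.mem_powerset, Finset.mem_biUnion,
          Finset.mem_range, Finset.mem_powersetCard]
        constructor
        · rintro ⟨h1', h2'⟩; exact ⟨C.card, by omega, h1', rfl⟩
        · rintro ⟨i, hi, hsub', hcard'⟩; exact ⟨hsub', by omega⟩
      rw [hun, Finset.card_biUnion]
      · apply Finset.sum_congr rfl
        intro i _
        rw [Finset.card_powersetCard, hcardT]
      · intro i _ j _ hij
        apply Finset.disjoint_left.mpr
        intro C hCi hCj
        rw [Finset.mem_powersetCard] at hCi hCj
        exact hij (hCi.2.symm.trans hCj.2)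
    rw [← hGsplit, hfull, hempty, Finset.card_singleton, hW]
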